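/- A tree T admits an odd caterpillar factor if and only if the spanning subgraph F with edge set E' = { e ∈ E(T) : T − e has two odd components } is an odd caterpillar factor of T. -/

import Mathlib

open SimpleGraph

/-- The degree of `v` in `H`, defined as the cardinality of its neighbor set. -/
noncomputable def edeg {V : Type*} (H : SimpleGraph V) (v : V) : ℕ := (H.neighborSet v).ncard

/-- A caterpillar: a connected acyclic graph with at least one edge in which
all vertices of degree at least 2 lie on a common path (the spine). -/
def IsCaterpillar {W : Type*} (H : SimpleGraph W) : Prop :=
  H.Connected ∧ H.IsAcyclic ∧ H.edgeSet.Nonempty ∧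
    ∃ (u v : W) (p : H.Walk u v), p.IsPath ∧ ∀ w : W, 2 ≤ edeg H w → w ∈ p.support

/-- An odd caterpillar: a caterpillar in which every vertex of degree at least 2
has odd degree. -/
def IsOddCaterpillar {W : Type*} (H : SimpleGraph W) : Prop :=
  IsCaterpillar H ∧ ∀ w : W, 2 ≤ edeg H w → Odd (edeg H w)

/-- An odd caterpillar factor of `T`: a spanning subgraph each of whose connected
components is an odd caterpillar. -/
def IsOddCaterpillarFactor {V : Type*} (T H : SimpleGraph V) : Prop :=
  H ≤ T ∧ ∀ c : H.ConnectedComponent, IsOddCaterpillar (SimpleGraph.induce c.supp H)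

/-- The oddness of `v` in `T`: the number of odd-order components of `T - v`. -/
noncomputable def oddness {V : Type*} (T : SimpleGraph V) (v : V) : ℕ :=
  {c : (SimpleGraph.induce {w : V | w ≠ v} T).ConnectedComponent | Odd c.supp.ncard}.ncard

set_option linter.unusedSectionVars false

section Aux
variable {V : Type*} [Fintype V]

lemma edeg_induce_supp {H : SimpleGraph V} (c : H.ConnectedComponent)
    {v : V} (hv : v ∈ c.supp) :
    edeg (SimpleGraph.induce c.supp H) ⟨v, hv⟩ = edeg H v := by
  classical
  have himg : Subtype.val '' ((SimpleGraph.induce c.supp H).neighborSet ⟨v, hv⟩)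
      = H.neighborSet v := by
    ext x
    simp only [Set.mem_image, mem_neighborSet, comap_adj, Function.Embedding.coe_subtype]
    constructor
    · rintro ⟨⟨x, hx⟩, hadj, rfl⟩; exact hadj
    · intro hadj
      have hx : x ∈ c.supp := by
        rw [ConnectedComponent.mem_supp_iff] at hv ⊢
        rw [← hv]
        exact ConnectedComponent.sound hadj.symm.reachable
      exact ⟨⟨x, hx⟩, hadj, rfl⟩
  calc edeg (SimpleGraph.induce c.supp H) ⟨v, hv⟩
      = (Subtype.val '' ((SimpleGraph.induce c.supp H).neighborSet ⟨v, hv⟩)).ncard :=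
        (Set.ncard_image_of_injective _ Subtype.val_injective).symm
    _ = edeg H v := by rw [himg]; rfl

lemma factor_odd_deg {T H : SimpleGraph V} (hH : IsOddCaterpillarFactor T H) (v : V) :
    Odd (edeg H v) := by
  classical
  set c := H.connectedComponentMk v with hc
  have hv : v ∈ c.supp := rfl
  obtain ⟨hcat, hodd⟩ := hH.2 c
  obtain ⟨a, b, hab⟩ : ∃ a b : c.supp, (SimpleGraph.induce c.supp H).Adj a b := by
    obtain ⟨e, he⟩ := hcat.2.2.1
    induction e using Sym2.ind with
    | _ a b => exact ⟨a, b, he⟩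
  have hab' : H.Adj a.1 b.1 := hab
  have hreach : H.Reachable v a.1 := by
    have ha := a.2
    rw [ConnectedComponent.mem_supp_iff] at ha
    exact (ConnectedComponent.eq.mp (ha.trans hc)).symm
  have hnbr : ∃ x, H.Adj v x := by
    by_cases hva : v = a.1
    · exact ⟨b.1, hva ▸ hab'⟩
    · obtain ⟨w⟩ := hreach
      have hnil : ¬ w.Nil := SimpleGraph.Walk.not_nil_of_ne hva
      exact ⟨_, (w.firstDart hnil).adj⟩
  have h1 : 1 ≤ edeg H v := by
    obtain ⟨x, hx⟩ := hnbr
    exact Set.ncard_pos (Set.toFinite _) |>.mpr ⟨x, hx⟩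
  rcases eq_or_lt_of_le h1 with h | h
  · exact ⟨0, by omega⟩
  · have h2 : 2 ≤ edeg (SimpleGraph.induce c.supp H) ⟨v, hv⟩ := by
      rw [edeg_induce_supp]; exact h
    have := hodd ⟨v, hv⟩ h2
    rwa [edeg_induce_supp] at this

end Aux

section Aux2
variable {V : Type*} [Fintype V]

lemma comp_cases {T : SimpleGraph V} (hconn : T.Connected) {u v : V}
    (c : (T.deleteEdges {s(u,v)}).ConnectedComponent) :
    c = (T.deleteEdges {s(u,v)}).connectedComponentMk u ∨
    c = (T.deleteEdges {s(u,v)}).connectedComponentMk v := by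
  obtain ⟨w, rfl⟩ := c.exists_rep
  have key : ∀ {x y : V} (_ : T.Walk x y),
      (T.deleteEdges {s(u,v)}).Reachable x y ∨ (T.deleteEdges {s(u,v)}).Reachable x u ∨
        (T.deleteEdges {s(u,v)}).Reachable x v := by
    intro x y p
    induction p with
    | nil => exact Or.inl (Reachable.refl _)
    | @cons a b c h p ih =>
      by_cases he : s(a, b) = s(u, v)
      · rw [Sym2.eq_iff] at he
        rcases he with ⟨rfl, rfl⟩ | ⟨rfl, rfl⟩
        · exact Or.inr (Or.inl (Reachable.refl _))
        · exact Or.inr (Or.inr (Reachable.refl _))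
      · have hadj : (T.deleteEdges {s(u,v)}).Adj a b := by
          rw [deleteEdges_adj]
          exact ⟨h, by simpa using he⟩
        rcases ih with h1 | h1 | h1
        · exact Or.inl (hadj.reachable.trans h1)
        · exact Or.inr (Or.inl (hadj.reachable.trans h1))
        · exact Or.inr (Or.inr (hadj.reachable.trans h1))
  rcases key (hconn.preconnected w u).some with h1 | h1 | h1
  · exact Or.inl (ConnectedComponent.sound h1)
  · exact Or.inl (ConnectedComponent.sound h1)
  · exact Or.inr (ConnectedComponent.sound h1)

lemma count_lemma {T H : SimpleGraph V} (hle : H ≤ T) (hac : T.IsAcyclic)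
    (hdeg : ∀ w, Odd (edeg H w)) {u v : V} (huv : T.Adj u v) :
    (Odd ((T.deleteEdges {s(u,v)}).connectedComponentMk u).supp.ncard ↔ H.Adj u v) := by
  classical
  set G := T.deleteEdges {s(u,v)} with hG
  have hbridge : ¬ G.Reachable u v := by
    have hb := (isAcyclic_iff_forall_adj_isBridge.mp hac) huv
    rw [isBridge_iff] at hb
    exact hb
  set A : Finset V := Set.toFinset (G.connectedComponentMk u).supp with hA
  have memA : ∀ x, x ∈ A ↔ G.Reachable x u := by
    intro x
    rw [hA, Set.mem_toFinset, ConnectedComponent.mem_supp_iff, ConnectedComponent.eq]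
  have huA : u ∈ A := (memA u).2 (Reachable.refl u)
  have hvA : v ∉ A := fun h => hbridge ((memA v).1 h).symm
  have key : ∀ w ∈ A, ∀ x, H.Adj w x → x ∉ A → w = u ∧ x = v := by
    intro w hw x hwx hx
    by_cases he : s(w,x) = s(u,v)
    · rw [Sym2.eq_iff] at he
      rcases he with ⟨rfl, rfl⟩ | ⟨rfl, rfl⟩
      · exact ⟨rfl, rfl⟩
      · exact absurd hw hvA
    · have hadj : G.Adj w x := by
        rw [hG, deleteEdges_adj]
        exact ⟨hle hwx, by simpa using he⟩
      exact absurd ((memA x).2 (hadj.symm.reachable.trans ((memA w).1 hw))) hx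
  set N : V → Finset V := fun w => (H.neighborSet w).toFinset with hN
  have hdegN : ∀ w, edeg H w = (N w).card := fun w => Set.ncard_eq_toFinset_card' _
  -- the graph of H-edges inside A
  set K : SimpleGraph V :=
    { Adj := fun x y => H.Adj x y ∧ x ∈ A ∧ y ∈ A,
      symm := ⟨by rintro x y ⟨h, hx, hy⟩; exact ⟨h.symm, hy, hx⟩⟩,
      loopless := ⟨by rintro x ⟨h, _⟩; exact H.irrefl h⟩ } with hK
  have hKdeg : ∀ w ∈ A, K.degree w = (N w ∩ A).card := by
    intro w hw
    rw [degree]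
    congr 1
    ext x
    simp only [mem_neighborFinset, hK, Finset.mem_inter, hN, Set.mem_toFinset, mem_neighborSet]
    exact ⟨fun ⟨h, _, hx⟩ => ⟨h, hx⟩, fun ⟨h, hx⟩ => ⟨h, hw, hx⟩⟩
  have hKdeg0 : ∀ w ∉ A, K.degree w = 0 := by
    intro w hw
    rw [degree, Finset.card_eq_zero]
    ext x
    simp only [mem_neighborFinset, hK, Finset.notMem_empty, iff_false]
    rintro ⟨_, hwA, _⟩
    exact hw hwA
  have hS1 : Even (∑ w ∈ A, (N w ∩ A).card) := by
    have h2 := K.sum_degrees_eq_twice_card_edges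
    have heq : ∑ w ∈ A, (N w ∩ A).card = ∑ w, K.degree w := by
      rw [← Finset.sum_subset (Finset.subset_univ A) (fun w _ hw => hKdeg0 w hw)]
      exact Finset.sum_congr rfl (fun w hw => (hKdeg w hw).symm)
    rw [heq, h2]
    exact even_two_mul _
  have hS2 : (∑ w ∈ A, (N w \ A).card) = if H.Adj u v then 1 else 0 := by
    rw [Finset.sum_eq_single u]
    · have hNu : N u \ A = if H.Adj u v then {v} else ∅ := by
        ext x
        simp only [Finset.mem_sdiff, hN, Set.mem_toFinset, mem_neighborSet]
        split_ifs with h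
        · simp only [Finset.mem_singleton]
          constructor
          · rintro ⟨hadj, hx⟩; exact (key u huA x hadj hx).2
          · rintro rfl; exact ⟨h, hvA⟩
        · simp only [Finset.notMem_empty, iff_false, not_and]
          intro hadj hx
          exact h ((key u huA x hadj hx).2 ▸ hadj)
      rw [hNu]
      split_ifs <;> simp
    · intro w hw hne
      rw [Finset.card_eq_zero]
      refine Finset.eq_empty_iff_forall_notMem.mpr (fun x hx => ?_)
      rw [Finset.mem_sdiff, hN, Set.mem_toFinset, mem_neighborSet] at hx
      exact hne (key w hw x hx.1 hx.2).1
    · intro h; exact absurd huA h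
  have main : A.card % 2 = (if H.Adj u v then 1 else 0) := by
    have h1 : (∑ w ∈ A, edeg H w) % 2 = A.card % 2 := by
      rw [Finset.sum_nat_mod]
      rw [Finset.sum_congr rfl (fun w _ => Nat.odd_iff.mp (hdeg w))]
      simp
    have h2 : (∑ w ∈ A, edeg H w)
        = (∑ w ∈ A, (N w ∩ A).card) + (∑ w ∈ A, (N w \ A).card) := by
      rw [← Finset.sum_add_distrib]
      exact Finset.sum_congr rfl fun w _ => by
        rw [hdegN, ← Finset.card_inter_add_card_sdiff (N w) A]
    rw [← h1, h2, Nat.add_mod, Nat.even_iff.mp hS1, hS2]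
    split_ifs <;> rfl
  have hcard : ((T.deleteEdges {s(u,v)}).connectedComponentMk u).supp.ncard = A.card := by
    rw [hA, ← hG]
    exact Set.ncard_eq_toFinset_card' _
  rw [hcard]
  constructor
  · intro hodd
    by_contra hadj
    rw [Nat.odd_iff, main, if_neg hadj] at hodd
    exact absurd hodd (by norm_num)
  · intro hadj
    rw [Nat.odd_iff, main, if_pos hadj]

end Aux2


theorem tree_odd_caterpillar_factor_iff_marked_edges {V : Type*} [Fintype V]
    (T : SimpleGraph V) (hT : T.IsTree) :
    (∃ H : SimpleGraph V, IsOddCaterpillarFactor T H) ↔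
      IsOddCaterpillarFactor T (SimpleGraph.fromEdgeSet
        {e : Sym2 V | e ∈ T.edgeSet ∧
          ∀ c : (T.deleteEdges {e}).ConnectedComponent, Odd c.supp.ncard}) := by
  classical
  constructor
  · rintro ⟨H, hH⟩
    have hset : {e : Sym2 V | e ∈ T.edgeSet ∧
        ∀ c : (T.deleteEdges {e}).ConnectedComponent, Odd c.supp.ncard} = H.edgeSet := by
      ext e
      induction e using Sym2.ind with
      | _ u v =>
        simp only [Set.mem_setOf_eq, mem_edgeSet]
        constructor
        · rintro ⟨hTadj, hall⟩
          exact (count_lemma hH.1 hT.2 (factor_odd_deg hH) hTadj).1 (hall _)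
        · intro hadj
          have hTadj : T.Adj u v := hH.1 hadj
          refine ⟨hTadj, fun c => ?_⟩
          rcases comp_cases hT.1 c with rfl | rfl
          · exact (count_lemma hH.1 hT.2 (factor_odd_deg hH) hTadj).2 hadj
          · have h := (count_lemma hH.1 hT.2 (factor_odd_deg hH) hTadj.symm).2 hadj.symm
            rwa [Sym2.eq_swap] at h
    rw [hset, fromEdgeSet_edgeSet]
    exact hH
  · intro h
    exact ⟨_, h⟩
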